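/- The probability measure μ is invariant for the kernel P_c: for every measurable set S ⊆ {1,…,B} × ℝ^d, ∫ P_c(x, S) μ(dx) = μ(S). Consequently, the marginal of μ on the ℝ^d-component has Lebesgue density π̂(θ) = π̂_KDE(θ)L(θ) / ∫_{ℝ^d} π̂_KDE(τ)L(τ) dτ. -/

import Mathlib

open MeasureTheory Finset
open scoped Classical ENNReal NNReal

section Aux
variable {α : Type*} [MeasurableSpace α] {μ : Measure α} [SigmaFinite μ]

/-- measurability of the parametric integral -/
lemma aux_T_meas (K2 Lf : α → ℝ) (hK2m : Measurable K2) (hLm : Measurable Lf)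
    (a b p : ℝ) (A : Set α) (hA : MeasurableSet A) :
    Measurable fun x => ∫ y in A, a * K2 y * min (b * Lf y / (p * Lf x)) 1 ∂μ := by
  have hcore : Measurable fun z : α × α =>
      (Prod.snd ⁻¹' A).indicator
        (fun z : α × α => a * K2 z.2 * min (b * Lf z.2 / (p * Lf z.1)) 1) z := by
    apply Measurable.indicator _ (measurable_snd hA)
    apply Measurable.mul
    · exact (measurable_const.mul (hK2m.comp measurable_snd))
    · exact Measurable.min (((measurable_const.mul (hLm.comp measurable_snd))).div
        (measurable_const.mul (hLm.comp measurable_fst))) measurable_const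
  have hsm := (hcore.stronglyMeasurable).integral_prod_right' (ν := μ)
  have : (fun x => ∫ y in A, a * K2 y * min (b * Lf y / (p * Lf x)) 1 ∂μ)
      = fun x => ∫ y, (Prod.snd ⁻¹' A).indicator
        (fun z : α × α => a * K2 z.2 * min (b * Lf z.2 / (p * Lf z.1)) 1) (x, y) ∂μ := by
    funext x
    rw [← integral_indicator hA]
    refine integral_congr_ae (Filter.Eventually.of_forall fun y => ?_)
    simp [Set.indicator_apply]
  rw [this]
  exact hsm.measurable

/-- nonnegativity and bound of the parametric integral -/
lemma aux_T_bound (K2 Lf : α → ℝ) (hK2m : Measurable K2) (hLm : Measurable Lf)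
    (hK2i : Integrable K2 μ) (hK2n : ∀ x, 0 ≤ K2 x) (hLn : ∀ x, 0 ≤ Lf x)
    (a b p : ℝ) (ha : 0 ≤ a) (hb : 0 ≤ b) (hp : 0 ≤ p)
    (A : Set α) (hA : MeasurableSet A) (x : α) :
    0 ≤ (∫ y in A, a * K2 y * min (b * Lf y / (p * Lf x)) 1 ∂μ) ∧
    (∫ y in A, a * K2 y * min (b * Lf y / (p * Lf x)) 1 ∂μ) ≤ a * ∫ y, K2 y ∂μ := by
  have hnn : ∀ y, 0 ≤ a * K2 y * min (b * Lf y / (p * Lf x)) 1 := by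
    intro y
    apply mul_nonneg (mul_nonneg ha (hK2n y))
    exact le_min (div_nonneg (mul_nonneg hb (hLn y)) (mul_nonneg hp (hLn x))) zero_le_one
  have hmeas : Measurable fun y => a * K2 y * min (b * Lf y / (p * Lf x)) 1 := by
    apply Measurable.mul (measurable_const.mul hK2m)
    exact Measurable.min ((measurable_const.mul hLm).div measurable_const) measurable_const
  have hint : Integrable (fun y => a * K2 y * min (b * Lf y / (p * Lf x)) 1) μ := by
    apply Integrable.mono' (hK2i.const_mul a) hmeas.aestronglyMeasurable
    filter_upwards with y
    rw [Real.norm_eq_abs, abs_of_nonneg (hnn y)]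
    calc a * K2 y * min (b * Lf y / (p * Lf x)) 1 ≤ a * K2 y * 1 := by
          apply mul_le_mul_of_nonneg_left (min_le_right _ _) (mul_nonneg ha (hK2n y))
      _ = a * K2 y := mul_one _
  constructor
  · exact setIntegral_nonneg hA fun y _ => hnn y
  · calc (∫ y in A, a * K2 y * min (b * Lf y / (p * Lf x)) 1 ∂μ)
        ≤ ∫ y, a * K2 y * min (b * Lf y / (p * Lf x)) 1 ∂μ :=
          setIntegral_le_integral hint (Filter.Eventually.of_forall hnn)
      _ ≤ ∫ y, a * K2 y ∂μ := by
          apply integral_mono hint (hK2i.const_mul a)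
          intro y
          calc a * K2 y * min (b * Lf y / (p * Lf x)) 1 ≤ a * K2 y * 1 :=
                mul_le_mul_of_nonneg_left (min_le_right _ _) (mul_nonneg ha (hK2n y))
            _ = a * K2 y := mul_one _
      _ = a * ∫ y, K2 y ∂μ := integral_const_mul a _


/-- detailed-balance swap -/
lemma aux_swap (K1 K2 Lf : α → ℝ) (hK1m : Measurable K1) (hK2m : Measurable K2)
    (hK1i : Integrable K1 μ) (hK2i : Integrable K2 μ)
    (hK1n : ∀ x, 0 ≤ K1 x) (hK2n : ∀ x, 0 ≤ K2 x)
    (hLm : Measurable Lf) (hLpos : ∀ x, 0 < Lf x)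
    (M : ℝ) (hM : ∀ x, Lf x ≤ M)
    (c p q' : ℝ) (hc : 0 ≤ c) (hp : 0 < p) (hq : 0 < q')
    (A : Set α) (hA : MeasurableSet A) :
    ∫ x, (K1 x * Lf x) * ∫ y in A, p * c * K2 y * min (q' * Lf y / (p * Lf x)) 1 ∂μ ∂μ
      = ∫ y in A, (K2 y * Lf y) * ∫ x, q' * c * K1 x * min (p * Lf x / (q' * Lf y)) 1 ∂μ ∂μ := by
  set core : α × α → ℝ :=
    fun z => c * (K1 z.1 * K2 z.2 * min (q' * Lf z.2) (p * Lf z.1)) with hcore_def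
  have hcore_m : Measurable core := by
    apply Measurable.mul measurable_const
    apply Measurable.mul ((hK1m.comp measurable_fst).mul (hK2m.comp measurable_snd))
    exact Measurable.min (measurable_const.mul (hLm.comp measurable_snd))
      (measurable_const.mul (hLm.comp measurable_fst))
  have hcore_nn : ∀ z, 0 ≤ core z := by
    intro z
    apply mul_nonneg hc
    apply mul_nonneg (mul_nonneg (hK1n _) (hK2n _))
    exact le_min (mul_nonneg hq.le (hLpos _).le) (mul_nonneg hp.le (hLpos _).le)
  set F : α × α → ℝ := fun z => (Prod.snd ⁻¹' A).indicator core z with hF_def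
  have hF_m : Measurable F := hcore_m.indicator (measurable_snd hA)
  have hF_nn : ∀ z, 0 ≤ F z := fun z => Set.indicator_nonneg (fun z _ => hcore_nn z) z
  have hF_int : Integrable F (μ.prod μ) := by
    have hbig : Integrable (fun z : α × α => (c * (q' * M)) * (K1 z.1 * K2 z.2)) (μ.prod μ) :=
      (hK1i.mul_prod hK2i).const_mul _
    apply Integrable.mono' hbig hF_m.aestronglyMeasurable
    filter_upwards with z
    rw [Real.norm_eq_abs, abs_of_nonneg (hF_nn z)]
    have hcz : core z ≤ (c * (q' * M)) * (K1 z.1 * K2 z.2) := by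
      have h1 : min (q' * Lf z.2) (p * Lf z.1) ≤ q' * M :=
        (min_le_left _ _).trans (by nlinarith [hM z.2, (hLpos z.2).le])
      have h2 : 0 ≤ K1 z.1 * K2 z.2 := mul_nonneg (hK1n _) (hK2n _)
      calc core z = c * ((K1 z.1 * K2 z.2) * min (q' * Lf z.2) (p * Lf z.1)) := rfl
        _ ≤ c * ((K1 z.1 * K2 z.2) * (q' * M)) := by
            apply mul_le_mul_of_nonneg_left (mul_le_mul_of_nonneg_left h1 h2) hc
        _ = (c * (q' * M)) * (K1 z.1 * K2 z.2) := by ring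
    exact le_trans (Set.indicator_le_self' (fun z _ => hcore_nn z) z) hcz
  have hLHS : ∀ x, (K1 x * Lf x) * (∫ y in A, p * c * K2 y * min (q' * Lf y / (p * Lf x)) 1 ∂μ)
      = ∫ y, F (x, y) ∂μ := by
    intro x
    rw [← integral_const_mul]
    rw [← integral_indicator hA]
    refine integral_congr_ae (Filter.Eventually.of_forall fun y => ?_)
    by_cases hy : y ∈ A
    · rw [Set.indicator_of_mem hy]
      simp only [hF_def]
      rw [Set.indicator_of_mem (Set.mem_preimage.mpr hy : (x, y) ∈ Prod.snd ⁻¹' A)]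
      have hpl : (0 : ℝ) < p * Lf x := mul_pos hp (hLpos x)
      have hmin : min (q' * Lf y / (p * Lf x)) 1 = min (q' * Lf y) (p * Lf x) / (p * Lf x) := by
        rw [← min_div_div_right hpl.le, div_self hpl.ne']
      rw [hmin]
      simp only [hcore_def]
      field_simp [(hLpos x).ne']
    · rw [Set.indicator_of_notMem hy]
      simp only [hF_def]
      rw [Set.indicator_of_notMem (fun hc' => hy (Set.mem_preimage.mp hc') : ¬ (x, y) ∈ Prod.snd ⁻¹' A)]
  have hRHS : ∀ y, (Set.indicator A
      (fun y => (K2 y * Lf y) * ∫ x, q' * c * K1 x * min (p * Lf x / (q' * Lf y)) 1 ∂μ) y)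
      = ∫ x, F (x, y) ∂μ := by
    intro y
    by_cases hy : y ∈ A
    · rw [Set.indicator_of_mem hy]
      rw [← integral_const_mul]
      refine integral_congr_ae (Filter.Eventually.of_forall fun x => ?_)
      simp only [hF_def]
      rw [Set.indicator_of_mem (Set.mem_preimage.mpr hy : (x, y) ∈ Prod.snd ⁻¹' A)]
      have hpl : (0 : ℝ) < q' * Lf y := mul_pos hq (hLpos y)
      have hmin : min (p * Lf x / (q' * Lf y)) 1 = min (p * Lf x) (q' * Lf y) / (q' * Lf y) := by
        rw [← min_div_div_right hpl.le, div_self hpl.ne']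
      rw [hmin]
      simp only [hcore_def]
      rw [min_comm (p * Lf x) (q' * Lf y)]
      field_simp [(hLpos y).ne']
    · rw [Set.indicator_of_notMem hy]
      symm
      rw [show (0:ℝ) = ∫ _ : α, (0:ℝ) ∂μ by simp]
      refine integral_congr_ae (Filter.Eventually.of_forall fun x => ?_)
      simp only [hF_def]
      rw [Set.indicator_of_notMem (fun hc' => hy (Set.mem_preimage.mp hc') : ¬ (x, y) ∈ Prod.snd ⁻¹' A)]
  calc ∫ x, (K1 x * Lf x) * ∫ y in A, p * c * K2 y * min (q' * Lf y / (p * Lf x)) 1 ∂μ ∂μ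
      = ∫ x, ∫ y, F (x, y) ∂μ ∂μ :=
        integral_congr_ae (Filter.Eventually.of_forall fun x => hLHS x)
    _ = ∫ y, ∫ x, F (x, y) ∂μ ∂μ := by
        apply integral_integral_swap
        have : Function.uncurry (fun x y => F (x, y)) = F := by
          funext z; simp [Function.uncurry]
        rw [this]; exact hF_int
    _ = ∫ y, (Set.indicator A
          (fun y => (K2 y * Lf y) * ∫ x, q' * c * K1 x * min (p * Lf x / (q' * Lf y)) 1 ∂μ)) y ∂μ :=
        (integral_congr_ae (Filter.Eventually.of_forall fun y => (hRHS y))).symm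
    _ = ∫ y in A, (K2 y * Lf y) * ∫ x, q' * c * K1 x * min (p * Lf x / (q' * Lf y)) 1 ∂μ ∂μ :=
        integral_indicator hA

end Aux

set_option maxHeartbeats 2000000 in
/-- the measure `μ` is invariant for the graph-enabled MCMC kernel `Pc`,
and its second marginal has Lebesgue density `π̂(θ) = π̂_KDE(θ)L(θ)/∫ π̂_KDE L`. -/
theorem stmt_1
    (d B : ℕ) (hd : 1 ≤ d) (hB : 1 ≤ B)
    (θp : Fin B → EuclideanSpace ℝ (Fin d))
    (K : EuclideanSpace ℝ (Fin d) → ℝ)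
    (hKmeas : Measurable K) (hKnonneg : ∀ u, 0 ≤ K u)
    (hKint : ∫ u, K u = 1)
    (h : ℝ) (hh : 0 < h)
    (E : Fin B → Fin B → Prop) [DecidableRel E]
    (hEsymm : ∀ i j, E i j → E j i) (hEirr : ∀ i, ¬ E i i)
    (D : Fin B → ℕ)
    (hD : ∀ i, D i = (Finset.univ.filter (fun j => E i j)).card)
    (hD1 : ∀ i, 1 ≤ D i)
    (ρ : ℝ) (hρ0 : 0 < ρ) (hρ1 : ρ < 1)
    (q : Fin B → Fin B → ℝ)
    (hq : ∀ i j, q i j = ρ / B + (1 - ρ) * (if E i j then (1 : ℝ) else 0) / (D i))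
    (L : EuclideanSpace ℝ (Fin d) → ℝ)
    (hLpos : ∀ x, 0 < L x) (hLmeas : Measurable L)
    (hLbdd : BddAbove (Set.range L))
    (πK : EuclideanSpace ℝ (Fin d) → ℝ)
    (hπK : ∀ x, πK x = (1 / (B * h ^ d)) * ∑ i, K (h⁻¹ • (x - θp i)))
    (hpos : 0 < ∫ x, πK x * L x)
    (r : Fin B → EuclideanSpace ℝ (Fin d) → ℝ)
    (hr : ∀ i x, r i x = 1 - ∑ ℓ, ∫ y,
      q i ℓ * (h ^ d)⁻¹ * K (h⁻¹ • (y - θp ℓ)) * min (q ℓ i * L y / (q i ℓ * L x)) 1)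
    (Pc : (Fin B × EuclideanSpace ℝ (Fin d)) → Set (Fin B × EuclideanSpace ℝ (Fin d)) → ℝ)
    (hPc : ∀ i x S, MeasurableSet S → Pc (i, x) S =
      (∑ j, ∫ y in {y | (j, y) ∈ S},
        q i j * (h ^ d)⁻¹ * K (h⁻¹ • (y - θp j)) * min (q j i * L y / (q i j * L x)) 1)
      + (if (i, x) ∈ S then r i x else 0))
    (μ : Measure (Fin B × EuclideanSpace ℝ (Fin d))) [IsProbabilityMeasure μ]
    (hμ : ∀ (j : Fin B) (A : Set (EuclideanSpace ℝ (Fin d))), MeasurableSet A →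
      (μ ({j} ×ˢ A)).toReal =
        (∫ y in A, K (h⁻¹ • (y - θp j)) * L y) /
          ∑ ℓ, ∫ y, K (h⁻¹ • (y - θp ℓ)) * L y) :
    (∀ S, MeasurableSet S → ∫ x, Pc x S ∂μ = (μ S).toReal) ∧
    (∀ A : Set (EuclideanSpace ℝ (Fin d)), MeasurableSet A →
      ((μ.map Prod.snd) A).toReal = ∫ x in A, πK x * L x / ∫ τ, πK τ * L τ) := by
  
  classical
  have hhd : (0:ℝ) < h ^ d := pow_pos hh d
  have hB0 : (0:ℝ) < B := by exact_mod_cast hB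
  set M := sSup (Set.range L) with hMdef
  have hM : ∀ x, L x ≤ M := fun x => le_csSup hLbdd ⟨x, rfl⟩
  have hKi : Integrable K := integrable_of_integral_eq_one hKint
  have hKfm : ∀ i : Fin B, Measurable fun x : EuclideanSpace ℝ (Fin d) => K (h⁻¹ • (x - θp i)) :=
    fun i => hKmeas.comp ((measurable_id.sub measurable_const).const_smul h⁻¹)
  have hKfi : ∀ i : Fin B, Integrable fun x : EuclideanSpace ℝ (Fin d) => K (h⁻¹ • (x - θp i)) := by
    intro i
    have h1 : Integrable (fun x : EuclideanSpace ℝ (Fin d) => K (h⁻¹ • x)) :=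
      (integrable_comp_smul_iff volume K (inv_ne_zero hh.ne')).mpr hKi
    have h2 := h1.comp_sub_right (θp i)
    simpa using h2
  have hKfv : ∀ i : Fin B, (∫ y, K (h⁻¹ • (y - θp i))) = h ^ d := by
    intro i
    have h1 : (∫ y : EuclideanSpace ℝ (Fin d), K (h⁻¹ • (y - θp i)))
        = ∫ y : EuclideanSpace ℝ (Fin d), (fun u => K (h⁻¹ • u)) (y - θp i) := rfl
    rw [h1, integral_sub_right_eq_self (fun u => K (h⁻¹ • u)) (θp i),
      Measure.integral_comp_smul volume K h⁻¹, finrank_euclideanSpace_fin, hKint,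
      smul_eq_mul, mul_one, ← inv_pow, inv_inv, abs_of_pos hhd]
  have hgm : ∀ i : Fin B, Measurable fun x => K (h⁻¹ • (x - θp i)) * L x :=
    fun i => (hKfm i).mul hLmeas
  have hgnn : ∀ (i : Fin B) x, 0 ≤ K (h⁻¹ • (x - θp i)) * L x :=
    fun i x => mul_nonneg (hKnonneg _) (hLpos x).le
  have hgi : ∀ i : Fin B, Integrable fun x => K (h⁻¹ • (x - θp i)) * L x := by
    intro i
    apply Integrable.mono' ((hKfi i).const_mul M) (hgm i).aestronglyMeasurable
    filter_upwards with x
    rw [Real.norm_eq_abs, abs_of_nonneg (hgnn i x)]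
    calc K (h⁻¹ • (x - θp i)) * L x ≤ K (h⁻¹ • (x - θp i)) * M :=
          mul_le_mul_of_nonneg_left (hM x) (hKnonneg _)
      _ = M * K (h⁻¹ • (x - θp i)) := mul_comm _ _
  set Z := ∑ ℓ, ∫ y, K (h⁻¹ • (y - θp ℓ)) * L y with hZdef
  have hRZ : ∫ x, πK x * L x = (B * h ^ d : ℝ)⁻¹ * Z := by
    have h1 : ∀ x, πK x * L x = (B * h ^ d : ℝ)⁻¹ * ∑ i, K (h⁻¹ • (x - θp i)) * L x := by
      intro x
      rw [hπK x, one_div, mul_assoc, Finset.sum_mul]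
    calc ∫ x, πK x * L x
        = ∫ x, (B * h ^ d : ℝ)⁻¹ * ∑ i, K (h⁻¹ • (x - θp i)) * L x :=
          integral_congr_ae (Filter.Eventually.of_forall h1)
      _ = (B * h ^ d : ℝ)⁻¹ * ∫ x, ∑ i, K (h⁻¹ • (x - θp i)) * L x := integral_const_mul _ _
      _ = (B * h ^ d : ℝ)⁻¹ * ∑ i, ∫ x, K (h⁻¹ • (x - θp i)) * L x := by
          rw [integral_finset_sum _ fun i _ => hgi i]
      _ = (B * h ^ d : ℝ)⁻¹ * Z := by rw [← hZdef]
  have hZpos : 0 < Z := by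
    have hc : (0:ℝ) < (B * h ^ d : ℝ)⁻¹ := by positivity
    have h2 := hpos
    rw [hRZ] at h2
    by_contra hle
    push_neg at hle
    nlinarith
  have hgZi : ∀ i : Fin B, Integrable fun x => K (h⁻¹ • (x - θp i)) * L x / Z :=
    fun i => (hgi i).div_const Z
  have hgZnn : ∀ (i : Fin B) x, 0 ≤ K (h⁻¹ • (x - θp i)) * L x / Z :=
    fun i x => div_nonneg (hgnn i x) hZpos.le
  set m : Fin B → Measure (Fin B × EuclideanSpace ℝ (Fin d)) :=
    fun i => Measure.map (fun x => (i, x))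
      (volume.withDensity (fun x => ENNReal.ofReal (K (h⁻¹ • (x - θp i)) * L x / Z)))
    with hmdef
  set ν : Measure (Fin B × EuclideanSpace ℝ (Fin d)) := ∑ i, m i with hνdef
  have hm_apply : ∀ (i : Fin B) S, MeasurableSet S → m i S
      = ENNReal.ofReal (∫ x in {x | (i, x) ∈ S}, K (h⁻¹ • (x - θp i)) * L x / Z) := by
    intro i S hS
    have hSi : MeasurableSet {x | (i, x) ∈ S} := measurable_prodMk_left hS
    simp only [hmdef]
    rw [Measure.map_apply measurable_prodMk_left hS]
    have hpre : (fun x => (i, x)) ⁻¹' S = {x | (i, x) ∈ S} := rfl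
    rw [hpre, withDensity_apply _ hSi]
    rw [← ofReal_integral_eq_lintegral_ofReal ((hgZi i).restrict)
      (Filter.Eventually.of_forall (hgZnn i))]
  have hνS : ∀ S, MeasurableSet S → ν S
      = ∑ i, ENNReal.ofReal (∫ x in {x | (i, x) ∈ S}, K (h⁻¹ • (x - θp i)) * L x / Z) := by
    intro S hS
    rw [hνdef, Measure.finset_sum_apply]
    exact Finset.sum_congr rfl fun i _ => hm_apply i S hS
  have hνS_toReal : ∀ S, MeasurableSet S → (ν S).toReal
      = ∑ i, ∫ x in {x | (i, x) ∈ S}, K (h⁻¹ • (x - θp i)) * L x / Z := by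
    intro S hS
    rw [hνS S hS, ENNReal.toReal_sum fun i _ => ENNReal.ofReal_ne_top]
    exact Finset.sum_congr rfl fun i _ => ENNReal.toReal_ofReal
      (setIntegral_nonneg (measurable_prodMk_left hS) fun x _ => hgZnn i x)
  have hμν : μ = ν := by
    apply ext_of_generate_finite _ generateFrom_prod.symm isPiSystem_prod
    · rintro _ ⟨s, hs, t, ht, rfl⟩
      have ht' : MeasurableSet t := ht
      show μ (s ×ˢ t) = ν (s ×ˢ t)
      have hdec : s ×ˢ t = ⋃ j ∈ s.toFinset, (({j} : Set (Fin B)) ×ˢ t) := by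
        ext z
        simp only [Set.mem_prod, Set.mem_iUnion, Set.mem_toFinset, Set.mem_singleton_iff,
          exists_prop]
        constructor
        · rintro ⟨h1, h2⟩
          exact ⟨z.1, h1, rfl, h2⟩
        · rintro ⟨i, hi, h1, h2⟩
          exact ⟨by rw [h1]; exact hi, h2⟩
      have hdisj : (↑s.toFinset : Set (Fin B)).Pairwise
          (Function.onFun Disjoint fun j => (({j} : Set (Fin B)) ×ˢ t)) := by
        intro a _ b _ hab
        simp only [Function.onFun]
        apply Set.disjoint_left.mpr
        rintro ⟨z1, z2⟩ ⟨hz1, _⟩ ⟨hz2, _⟩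
        rw [Set.mem_singleton_iff] at hz1 hz2
        exact hab (hz1 ▸ hz2 ▸ rfl)
      have hmeasj : ∀ j ∈ s.toFinset, MeasurableSet (({j} : Set (Fin B)) ×ˢ t) :=
        fun j _ => (measurableSet_singleton j).prod ht'
      have hμj : ∀ j : Fin B, μ (({j} : Set (Fin B)) ×ˢ t)
          = ENNReal.ofReal ((∫ y in t, K (h⁻¹ • (y - θp j)) * L y) / Z) := by
        intro j
        have h1 := hμ j t ht'
        rw [← ENNReal.ofReal_toReal (measure_ne_top μ (({j} : Set (Fin B)) ×ˢ t)), h1]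
      have hνj : ∀ j : Fin B, ν (({j} : Set (Fin B)) ×ˢ t)
          = ENNReal.ofReal ((∫ y in t, K (h⁻¹ • (y - θp j)) * L y) / Z) := by
        intro j
        rw [hνS _ ((measurableSet_singleton j).prod ht')]
        rw [Finset.sum_eq_single j ?h1 ?h2]
        · congr 1
          have hset : {x | (j, x) ∈ (({j} : Set (Fin B)) ×ˢ t)} = t := by
            ext x; simp
          rw [hset, integral_div]
        case h1 =>
          intro i _ hij
          have hset : {x | (i, x) ∈ (({j} : Set (Fin B)) ×ˢ t)} = ∅ := by
            ext x
            simp only [Set.mem_setOf_eq, Set.mem_prod, Set.mem_singleton_iff,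
              Set.mem_empty_iff_false, iff_false, not_and]
            exact fun h1 _ => hij h1
          rw [hset]
          simp
        case h2 =>
          intro hj
          exact absurd (Finset.mem_univ j) hj
      rw [hdec, measure_biUnion_finset hdisj hmeasj, measure_biUnion_finset hdisj hmeasj]
      exact Finset.sum_congr rfl fun j _ => (hμj j).trans (hνj j).symm
    · have hν1 : ν Set.univ = 1 := by
        rw [hνS _ MeasurableSet.univ]
        have hset : ∀ i : Fin B,
            {x | (i, x) ∈ (Set.univ : Set (Fin B × EuclideanSpace ℝ (Fin d)))} = Set.univ :=
          fun i => rfl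
        simp only [hset, Measure.restrict_univ]
        have h2 : ∀ i : Fin B, (∫ x, K (h⁻¹ • (x - θp i)) * L x / Z)
            = (∫ x, K (h⁻¹ • (x - θp i)) * L x) / Z := fun i => integral_div _ _
        simp only [h2]
        rw [← ENNReal.ofReal_sum_of_nonneg
          (fun i _ => div_nonneg (integral_nonneg (fun x => hgnn i x)) hZpos.le)]
        rw [← Finset.sum_div, ← hZdef, div_self hZpos.ne']
        simp
      rw [measure_univ, hν1]
  constructor
  · intro S hS
    rw [hμν]
    have hSj : ∀ j : Fin B, MeasurableSet {y | (j, y) ∈ S} := fun j => measurable_prodMk_left hS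
    have hqpos : ∀ i j, 0 < q i j := by
      intro i j
      rw [hq]
      have hD0 : (0:ℝ) < (D i : ℝ) := by exact_mod_cast hD1 i
      have h1 : 0 < ρ / B := div_pos hρ0 hB0
      have h2 : 0 ≤ (1 - ρ) * (if E i j then (1:ℝ) else 0) / (D i) := by
        apply div_nonneg _ hD0.le
        apply mul_nonneg (by linarith)
        split <;> norm_num
      linarith
    have hcnn : (0:ℝ) ≤ (h ^ d)⁻¹ := inv_nonneg.mpr hhd.le
    have hTmeas : ∀ (i j : Fin B) (A : Set (EuclideanSpace ℝ (Fin d))), MeasurableSet A →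
        Measurable fun x => ∫ y in A,
          q i j * (h ^ d)⁻¹ * K (h⁻¹ • (y - θp j)) * min (q j i * L y / (q i j * L x)) 1 :=
      fun i j A hA => aux_T_meas _ L (hKfm j) hLmeas (q i j * (h ^ d)⁻¹) (q j i) (q i j) A hA
    have hT'meas : ∀ (i j : Fin B), Measurable fun x => ∫ y,
        q i j * (h ^ d)⁻¹ * K (h⁻¹ • (y - θp j)) * min (q j i * L y / (q i j * L x)) 1 := by
      intro i j
      have h1 := hTmeas i j Set.univ MeasurableSet.univ
      simpa [Measure.restrict_univ] using h1
    have hTbd : ∀ (i j : Fin B) (A : Set (EuclideanSpace ℝ (Fin d))), MeasurableSet A →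
        ∀ x, 0 ≤ (∫ y in A, q i j * (h ^ d)⁻¹ * K (h⁻¹ • (y - θp j)) *
            min (q j i * L y / (q i j * L x)) 1)
          ∧ (∫ y in A, q i j * (h ^ d)⁻¹ * K (h⁻¹ • (y - θp j)) *
            min (q j i * L y / (q i j * L x)) 1) ≤ q i j * (h ^ d)⁻¹ * h ^ d := by
      intro i j A hA x
      have h1 := aux_T_bound _ L (hKfm j) hLmeas (hKfi j) (fun y => hKnonneg _)
        (fun y => (hLpos y).le) (q i j * (h ^ d)⁻¹) (q j i) (q i j)
        (mul_nonneg (hqpos i j).le hcnn) (hqpos j i).le (hqpos i j).le A hA x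
      rw [hKfv j] at h1
      exact h1
    have hT'bd : ∀ (i j : Fin B) (x : EuclideanSpace ℝ (Fin d)),
        0 ≤ (∫ y, q i j * (h ^ d)⁻¹ * K (h⁻¹ • (y - θp j)) *
            min (q j i * L y / (q i j * L x)) 1)
          ∧ (∫ y, q i j * (h ^ d)⁻¹ * K (h⁻¹ • (y - θp j)) *
            min (q j i * L y / (q i j * L x)) 1) ≤ q i j * (h ^ d)⁻¹ * h ^ d := by
      intro i j x
      have h1 := hTbd i j Set.univ MeasurableSet.univ x
      simpa [Measure.restrict_univ] using h1
    have hrm : ∀ i : Fin B, Measurable (r i) := by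
      intro i
      have hre : r i = fun x => 1 - ∑ ℓ, ∫ y,
          q i ℓ * (h ^ d)⁻¹ * K (h⁻¹ • (y - θp ℓ)) * min (q ℓ i * L y / (q i ℓ * L x)) 1 :=
        funext fun x => hr i x
      rw [hre]
      exact measurable_const.sub (Finset.measurable_sum _ fun ℓ _ => hT'meas i ℓ)
    have hqb_nn : ∀ i' : Fin B, 0 ≤ ∑ ℓ, q i' ℓ * (h ^ d)⁻¹ * h ^ d := fun i' =>
      Finset.sum_nonneg fun ℓ _ => mul_nonneg (mul_nonneg (hqpos i' ℓ).le hcnn) hhd.le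
    have hrbd : ∀ (i : Fin B) x, |r i x| ≤ 1 + ∑ ℓ, q i ℓ * (h ^ d)⁻¹ * h ^ d := by
      intro i x
      rw [hr i x]
      have hs1 : 0 ≤ ∑ ℓ, ∫ y, q i ℓ * (h ^ d)⁻¹ * K (h⁻¹ • (y - θp ℓ)) *
          min (q ℓ i * L y / (q i ℓ * L x)) 1 :=
        Finset.sum_nonneg fun ℓ _ => (hT'bd i ℓ x).1
      have hs2 : (∑ ℓ, ∫ y, q i ℓ * (h ^ d)⁻¹ * K (h⁻¹ • (y - θp ℓ)) *
          min (q ℓ i * L y / (q i ℓ * L x)) 1) ≤ ∑ ℓ, q i ℓ * (h ^ d)⁻¹ * h ^ d :=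
        Finset.sum_le_sum fun ℓ _ => (hT'bd i ℓ x).2
      rw [abs_le]
      constructor <;> [linarith; linarith]
    have hfr : (fun z : Fin B × EuclideanSpace ℝ (Fin d) => Pc z S) = fun z =>
        (∑ j, ∫ y in {y | (j, y) ∈ S}, q z.1 j * (h ^ d)⁻¹ * K (h⁻¹ • (y - θp j)) *
          min (q j z.1 * L y / (q z.1 j * L z.2)) 1)
        + (if z ∈ S then r z.1 z.2 else 0) := by
      funext z
      obtain ⟨i, x⟩ := z
      exact hPc i x S hS
    have hindic : ∀ (i : Fin B) x, (if (i, x) ∈ S then r i x else 0)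
        = Set.indicator {y | (i, y) ∈ S} (r i) x := by
      intro i x
      by_cases hx : (i, x) ∈ S
      · rw [if_pos hx]
        exact (Set.indicator_of_mem (show x ∈ {y | (i, y) ∈ S} from hx) (r i)).symm
      · rw [if_neg hx]
        exact (Set.indicator_of_notMem (show x ∉ {y | (i, y) ∈ S} from hx) (r i)).symm
    have hfmeas : Measurable (fun z : Fin B × EuclideanSpace ℝ (Fin d) =>
        (∑ j, ∫ y in {y | (j, y) ∈ S}, q z.1 j * (h ^ d)⁻¹ * K (h⁻¹ • (y - θp j)) *
          min (q j z.1 * L y / (q z.1 j * L z.2)) 1)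
        + (if z ∈ S then r z.1 z.2 else 0)) := by
      have hcomp : ∀ i : Fin B, Measurable fun x : EuclideanSpace ℝ (Fin d) =>
          (∑ j, ∫ y in {y | (j, y) ∈ S}, q i j * (h ^ d)⁻¹ * K (h⁻¹ • (y - θp j)) *
            min (q j i * L y / (q i j * L x)) 1)
          + (if (i, x) ∈ S then r i x else 0) := by
        intro i
        apply Measurable.add
        · exact Finset.measurable_sum _ fun j _ => hTmeas i j _ (hSj j)
        · have he : (fun x => if (i, x) ∈ S then r i x else 0)
              = Set.indicator {y | (i, y) ∈ S} (r i) := funext fun x => hindic i x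
          exact he ▸ ((hrm i).indicator (hSj i))
      have h2 : Measurable fun p : EuclideanSpace ℝ (Fin d) × Fin B =>
          (∑ j, ∫ y in {y | (j, y) ∈ S}, q p.2 j * (h ^ d)⁻¹ * K (h⁻¹ • (y - θp j)) *
            min (q j p.2 * L y / (q p.2 j * L p.1)) 1)
          + (if (p.2, p.1) ∈ S then r p.2 p.1 else 0) :=
        measurable_from_prod_countable_left hcomp
      exact h2.comp measurable_swap
    have hfinm : ∀ i : Fin B, IsFiniteMeasure (m i) := by
      intro i
      constructor
      rw [hm_apply i Set.univ MeasurableSet.univ]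
      exact ENNReal.ofReal_lt_top
    have hfint : ∀ i : Fin B, Integrable (fun z : Fin B × EuclideanSpace ℝ (Fin d) => Pc z S)
        (m i) := by
      intro i
      haveI := hfinm i
      rw [hfr]
      apply Integrable.mono'
        (integrable_const (1 + 2 * ∑ i'' : Fin B, ∑ ℓ, q i'' ℓ * (h ^ d)⁻¹ * h ^ d))
        hfmeas.aestronglyMeasurable
      filter_upwards with z
      rw [Real.norm_eq_abs]
      have hrow : ∀ i' : Fin B, (∑ ℓ, q i' ℓ * (h ^ d)⁻¹ * h ^ d)
          ≤ ∑ i'' : Fin B, ∑ ℓ, q i'' ℓ * (h ^ d)⁻¹ * h ^ d :=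
        fun i' => Finset.single_le_sum (f := fun i'' => ∑ ℓ, q i'' ℓ * (h ^ d)⁻¹ * h ^ d)
          (fun i'' _ => hqb_nn i'') (Finset.mem_univ i')
      have h1 : |∑ j, ∫ y in {y | (j, y) ∈ S}, q z.1 j * (h ^ d)⁻¹ * K (h⁻¹ • (y - θp j)) *
          min (q j z.1 * L y / (q z.1 j * L z.2)) 1| ≤ ∑ j, q z.1 j * (h ^ d)⁻¹ * h ^ d := by
        rw [abs_of_nonneg (Finset.sum_nonneg fun j _ => (hTbd z.1 j _ (hSj j) z.2).1)]
        exact Finset.sum_le_sum fun j _ => (hTbd z.1 j _ (hSj j) z.2).2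
      have h2 : |if z ∈ S then r z.1 z.2 else 0| ≤ 1 + ∑ ℓ, q z.1 ℓ * (h ^ d)⁻¹ * h ^ d := by
        split
        · exact hrbd z.1 z.2
        · rw [abs_zero]
          have h3 := hqb_nn z.1
          linarith
      refine le_trans (abs_add_le _ _) (le_trans (add_le_add h1 h2) ?_)
      have h4 := hrow z.1
      linarith
    have hslice : ∀ i : Fin B, (∫ z, Pc z S ∂(m i))
        = ∫ x, (K (h⁻¹ • (x - θp i)) * L x / Z) * Pc (i, x) S := by
      intro i
      simp only [hmdef]
      rw [integral_map measurable_prodMk_left.aemeasurable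
        (by rw [hfr]; exact hfmeas.aestronglyMeasurable)]
      have hofReal : (fun x : EuclideanSpace ℝ (Fin d) =>
          ENNReal.ofReal (K (h⁻¹ • (x - θp i)) * L x / Z))
          = fun x => ((Real.toNNReal (K (h⁻¹ • (x - θp i)) * L x / Z) : ℝ≥0) : ℝ≥0∞) := rfl
      rw [hofReal, integral_withDensity_eq_integral_smul (((hgm i).div_const Z).real_toNNReal)]
      refine integral_congr_ae (Filter.Eventually.of_forall fun x => ?_)
      beta_reduce
      rw [NNReal.smul_def, Real.coe_toNNReal _ (hgZnn i x), smul_eq_mul]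
    have hint1 : ∀ (i j : Fin B) (A : Set (EuclideanSpace ℝ (Fin d))), MeasurableSet A →
        Integrable (fun x => (K (h⁻¹ • (x - θp i)) * L x / Z) *
          ∫ y in A, q i j * (h ^ d)⁻¹ * K (h⁻¹ • (y - θp j)) *
            min (q j i * L y / (q i j * L x)) 1) := by
      intro i j A hA
      apply Integrable.mono' ((hgZi i).const_mul (q i j * (h ^ d)⁻¹ * h ^ d))
        ((((hgm i).div_const Z).mul (hTmeas i j A hA)).aestronglyMeasurable)
      filter_upwards with x
      rw [Real.norm_eq_abs, Pi.mul_apply, abs_of_nonneg (mul_nonneg (hgZnn i x) (hTbd i j A hA x).1)]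
      refine le_trans (mul_le_mul_of_nonneg_left (hTbd i j A hA x).2 (hgZnn i x))
        (le_of_eq (mul_comm _ _))
    have hint1' : ∀ (i j : Fin B), Integrable (fun x => (K (h⁻¹ • (x - θp i)) * L x / Z) *
        ∫ y, q i j * (h ^ d)⁻¹ * K (h⁻¹ • (y - θp j)) *
          min (q j i * L y / (q i j * L x)) 1) := by
      intro i j
      have h1 := hint1 i j Set.univ MeasurableSet.univ
      simp only [Measure.restrict_univ] at h1
      exact h1
    have hint2 : ∀ i : Fin B, Integrable (fun x => (K (h⁻¹ • (x - θp i)) * L x / Z) *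
        Set.indicator {y | (i, y) ∈ S} (r i) x) := by
      intro i
      apply Integrable.mono' ((hgZi i).const_mul (1 + ∑ ℓ, q i ℓ * (h ^ d)⁻¹ * h ^ d))
        ((((hgm i).div_const Z).mul ((hrm i).indicator (hSj i))).aestronglyMeasurable)
      filter_upwards with x
      rw [Real.norm_eq_abs, Pi.mul_apply, abs_mul, abs_of_nonneg (hgZnn i x)]
      have hiabs : |Set.indicator {y | (i, y) ∈ S} (r i) x|
          ≤ 1 + ∑ ℓ, q i ℓ * (h ^ d)⁻¹ * h ^ d := by
        rw [Set.indicator_apply]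
        split
        · exact hrbd i x
        · rw [abs_zero]
          have h3 := hqb_nn i
          linarith
      refine le_trans (mul_le_mul_of_nonneg_left hiabs (hgZnn i x)) (le_of_eq (mul_comm _ _))
    have hrsplit : ∀ i : Fin B,
        (∫ x in {y | (i, y) ∈ S}, (K (h⁻¹ • (x - θp i)) * L x / Z) * r i x)
        = (∫ x in {y | (i, y) ∈ S}, K (h⁻¹ • (x - θp i)) * L x / Z)
          - ∑ ℓ, ∫ x in {y | (i, y) ∈ S}, (K (h⁻¹ • (x - θp i)) * L x / Z) *
              ∫ y, q i ℓ * (h ^ d)⁻¹ * K (h⁻¹ • (y - θp ℓ)) *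
                min (q ℓ i * L y / (q i ℓ * L x)) 1 := by
      intro i
      have e : ∀ x, (K (h⁻¹ • (x - θp i)) * L x / Z) * r i x
          = (K (h⁻¹ • (x - θp i)) * L x / Z)
            - ∑ ℓ, (K (h⁻¹ • (x - θp i)) * L x / Z) *
              ∫ y, q i ℓ * (h ^ d)⁻¹ * K (h⁻¹ • (y - θp ℓ)) *
                min (q ℓ i * L y / (q i ℓ * L x)) 1 := by
        intro x
        rw [hr i x, mul_sub, mul_one, Finset.mul_sum]
      rw [integral_congr_ae (Filter.Eventually.of_forall fun x => e x)]
      rw [integral_sub ((hgZi i).restrict)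
        (integrable_finset_sum _ fun ℓ _ => (hint1' i ℓ).restrict)]
      congr 1
      exact integral_finset_sum _ fun ℓ _ => (hint1' i ℓ).restrict
    calc ∫ z, Pc z S ∂ν
        = ∑ i, ∫ z, Pc z S ∂(m i) := by
          rw [hνdef]
          exact integral_finset_sum_measure fun i _ => hfint i
      _ = ∑ i, ∫ x, (K (h⁻¹ • (x - θp i)) * L x / Z) * Pc (i, x) S :=
          Finset.sum_congr rfl fun i _ => hslice i
      _ = ∑ i, ((∑ j, ∫ x, (K (h⁻¹ • (x - θp i)) * L x / Z) *
            ∫ y in {y | (j, y) ∈ S}, q i j * (h ^ d)⁻¹ * K (h⁻¹ • (y - θp j)) *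
              min (q j i * L y / (q i j * L x)) 1)
          + ∫ x in {y | (i, y) ∈ S}, (K (h⁻¹ • (x - θp i)) * L x / Z) * r i x) := by
          refine Finset.sum_congr rfl fun i _ => ?_
          have hre : ∀ x, (K (h⁻¹ • (x - θp i)) * L x / Z) * Pc (i, x) S
              = (∑ j, (K (h⁻¹ • (x - θp i)) * L x / Z) *
                  ∫ y in {y | (j, y) ∈ S}, q i j * (h ^ d)⁻¹ * K (h⁻¹ • (y - θp j)) *
                    min (q j i * L y / (q i j * L x)) 1)
                + (K (h⁻¹ • (x - θp i)) * L x / Z) *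
                    Set.indicator {y | (i, y) ∈ S} (r i) x := by
            intro x
            rw [hPc i x S hS, mul_add, Finset.mul_sum, hindic i x]
          rw [integral_congr_ae (Filter.Eventually.of_forall hre)]
          rw [integral_add (integrable_finset_sum _ fun j _ => hint1 i j _ (hSj j)) (hint2 i)]
          congr 1
          · exact integral_finset_sum _ fun j _ => hint1 i j _ (hSj j)
          · have he : (fun x => (K (h⁻¹ • (x - θp i)) * L x / Z) *
                Set.indicator {y | (i, y) ∈ S} (r i) x)
                = Set.indicator {y | (i, y) ∈ S}
                    (fun x => (K (h⁻¹ • (x - θp i)) * L x / Z) * r i x) := by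
              funext x
              by_cases hx : x ∈ {y | (i, y) ∈ S}
              · rw [Set.indicator_of_mem hx, Set.indicator_of_mem hx]
              · rw [Set.indicator_of_notMem hx, Set.indicator_of_notMem hx, mul_zero]
            rw [he]
            exact integral_indicator (hSj i)
      _ = ∑ i, ((∑ j, ∫ y in {y | (j, y) ∈ S}, (K (h⁻¹ • (y - θp j)) * L y / Z) *
            ∫ x, q j i * (h ^ d)⁻¹ * K (h⁻¹ • (x - θp i)) *
              min (q i j * L x / (q j i * L y)) 1)
          + ∫ x in {y | (i, y) ∈ S}, (K (h⁻¹ • (x - θp i)) * L x / Z) * r i x) := by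
          refine Finset.sum_congr rfl fun i _ => ?_
          congr 1
          refine Finset.sum_congr rfl fun j _ => ?_
          have key := aux_swap (μ := volume) (fun x => K (h⁻¹ • (x - θp i)))
            (fun y => K (h⁻¹ • (y - θp j))) L (hKfm i) (hKfm j) (hKfi i) (hKfi j)
            (fun x => hKnonneg _) (fun x => hKnonneg _) hLmeas hLpos M hM
            ((h ^ d)⁻¹) (q i j) (q j i) hcnn (hqpos i j) (hqpos j i) _ (hSj j)
          simp only [div_mul_eq_mul_div]
          rw [integral_div, integral_div, key]
      _ = (∑ i, ∑ j, ∫ y in {y | (j, y) ∈ S}, (K (h⁻¹ • (y - θp j)) * L y / Z) *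
            ∫ x, q j i * (h ^ d)⁻¹ * K (h⁻¹ • (x - θp i)) *
              min (q i j * L x / (q j i * L y)) 1)
          + ∑ i, ∫ x in {y | (i, y) ∈ S}, (K (h⁻¹ • (x - θp i)) * L x / Z) * r i x :=
          Finset.sum_add_distrib
      _ = (∑ j, ∑ i, ∫ y in {y | (j, y) ∈ S}, (K (h⁻¹ • (y - θp j)) * L y / Z) *
            ∫ x, q j i * (h ^ d)⁻¹ * K (h⁻¹ • (x - θp i)) *
              min (q i j * L x / (q j i * L y)) 1)
          + ∑ i, ((∫ x in {y | (i, y) ∈ S}, K (h⁻¹ • (x - θp i)) * L x / Z)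
            - ∑ ℓ, ∫ x in {y | (i, y) ∈ S}, (K (h⁻¹ • (x - θp i)) * L x / Z) *
                ∫ y, q i ℓ * (h ^ d)⁻¹ * K (h⁻¹ • (y - θp ℓ)) *
                  min (q ℓ i * L y / (q i ℓ * L x)) 1) := by
          congr 1
          · exact Finset.sum_comm
          · exact Finset.sum_congr rfl fun i _ => hrsplit i
      _ = (∑ i, ∑ ℓ, ∫ x in {y | (i, y) ∈ S}, (K (h⁻¹ • (x - θp i)) * L x / Z) *
            ∫ y, q i ℓ * (h ^ d)⁻¹ * K (h⁻¹ • (y - θp ℓ)) *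
              min (q ℓ i * L y / (q i ℓ * L x)) 1)
          + ((∑ i, ∫ x in {y | (i, y) ∈ S}, K (h⁻¹ • (x - θp i)) * L x / Z)
            - ∑ i, ∑ ℓ, ∫ x in {y | (i, y) ∈ S}, (K (h⁻¹ • (x - θp i)) * L x / Z) *
                ∫ y, q i ℓ * (h ^ d)⁻¹ * K (h⁻¹ • (y - θp ℓ)) *
                  min (q ℓ i * L y / (q i ℓ * L x)) 1) := by
          rw [Finset.sum_sub_distrib]
      _ = ∑ i, ∫ x in {y | (i, y) ∈ S}, K (h⁻¹ • (x - θp i)) * L x / Z := by ring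
      _ = (ν S).toReal := (hνS_toReal S hS).symm
  · intro A hA
    rw [hμν, Measure.map_apply measurable_snd hA]
    rw [hνS_toReal _ (measurable_snd hA)]
    have hsets : ∀ i : Fin B, {x | (i, x) ∈ Prod.snd ⁻¹' A} = A := fun i => rfl
    simp only [hsets]
    have hBh : (B * h ^ d : ℝ) ≠ 0 := by positivity
    symm
    calc ∫ x in A, πK x * L x / ∫ τ, πK τ * L τ
        = ∫ x in A, (∑ i, K (h⁻¹ • (x - θp i)) * L x) / Z := by
          refine integral_congr_ae (Filter.Eventually.of_forall fun x => ?_)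
          beta_reduce
          rw [hRZ, hπK x, one_div, mul_assoc, Finset.sum_mul,
            mul_div_mul_left _ _ (inv_ne_zero hBh)]
      _ = ∫ x in A, ∑ i, K (h⁻¹ • (x - θp i)) * L x / Z := by
          refine integral_congr_ae (Filter.Eventually.of_forall fun x => ?_)
          beta_reduce
          rw [Finset.sum_div]
      _ = ∑ i, ∫ x in A, K (h⁻¹ • (x - θp i)) * L x / Z :=
          integral_finset_sum _ fun i _ => (hgZi i).restrict
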